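/- Fix n ∈ ℕ and integers λ_0, λ_1, …, λ_n with λ_0 = 0, λ_k ≥ 0 for all 0 ≤ k ≤ n, and |λ_{k+1} − λ_k| = 1 for all 0 ≤ k < n. Then the number of sign sequences ε ∈ {−1, 1}^n such that the associated walk X_k = Σ_{i ≤ k} ε_i (with X_0 = 0) satisfies X_k − 2·min_{0 ≤ j ≤ k} X_j = λ_k for every 0 ≤ k ≤ n is exactly λ_n + 1 (equivalently, under the uniform probability measure on {−1,1}^n the Pitman transform follows the path (λ_0,…,λ_n) with probability (λ_n + 1)/2^n). -/

import Mathlib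

open Finset

/-! ### Auxiliary definitions for the Pitman counting bijection -/

/-- Running minimum of `lam` over `[k, n]`. -/
def pitD (n : ℕ) (lam : ℕ → ℤ) (k : ℕ) : ℤ := (Finset.Icc k n).fold min (lam n) lam

/-- The candidate walk with Pitman transform `lam` and final minimum `-c`. -/
def pitW (n : ℕ) (lam : ℕ → ℤ) (c : ℤ) (k : ℕ) : ℤ :=
  lam k - 2 * min c (pitD n lam k)

lemma pitD_le_lam' (n : ℕ) (lam : ℕ → ℤ) {k j : ℕ} (hkj : k ≤ j) (hj : j ≤ n) :
    pitD n lam k ≤ lam j :=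
  (Finset.fold_min_le _).mpr (Or.inr ⟨j, Finset.mem_Icc.mpr ⟨hkj, hj⟩, le_rfl⟩)

lemma pitD_le_lam (n : ℕ) (lam : ℕ → ℤ) {k : ℕ} (hk : k ≤ n) : pitD n lam k ≤ lam k :=
  pitD_le_lam' n lam le_rfl hk

lemma le_pitD (n : ℕ) (lam : ℕ → ℤ) {k : ℕ} {a : ℤ} (ha : a ≤ lam n)
    (h : ∀ j, k ≤ j → j ≤ n → a ≤ lam j) : a ≤ pitD n lam k :=
  (Finset.le_fold_min _).mpr ⟨ha, fun x hx => h x (Finset.mem_Icc.mp hx).1 (Finset.mem_Icc.mp hx).2⟩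

lemma pitD_mono (n : ℕ) (lam : ℕ → ℤ) : Monotone (pitD n lam) := by
  refine monotone_nat_of_le_succ fun k => ?_
  exact le_pitD n lam ((Finset.fold_min_le _).mpr (Or.inl le_rfl))
    (fun j hj hj' => pitD_le_lam' n lam (Nat.le_of_succ_le hj) hj')

lemma pitD_last (n : ℕ) (lam : ℕ → ℤ) : pitD n lam n = lam n := by
  simp [pitD, Finset.Icc_self]

lemma pitD_rec (n : ℕ) (lam : ℕ → ℤ) {k : ℕ} (hk : k < n) :
    pitD n lam k = min (lam k) (pitD n lam (k + 1)) := by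
  have h1 : (Finset.Icc k n) = insert k (Finset.Icc (k + 1) n) :=
    (Finset.insert_Icc_add_one_left_eq_Icc hk.le).symm
  have h2 : k ∉ Finset.Icc (k + 1) n := by simp
  rw [pitD, h1, Finset.fold_insert h2]; rfl

lemma pitD_zero (n : ℕ) (lam : ℕ → ℤ) (h0 : lam 0 = 0) (hnonneg : ∀ k ≤ n, 0 ≤ lam k) :
    pitD n lam 0 = 0 := by
  have h1 : pitD n lam 0 ≤ lam 0 := pitD_le_lam n lam (Nat.zero_le n)
  have h2 : (0 : ℤ) ≤ pitD n lam 0 :=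
    le_pitD n lam (hnonneg n le_rfl) (fun j _ hj => hnonneg j hj)
  omega

section Main

variable {n : ℕ} {lam : ℕ → ℤ}

lemma pitW_zero (h0 : lam 0 = 0) (hnonneg : ∀ k ≤ n, 0 ≤ lam k) {c : ℤ} (hc : 0 ≤ c) :
    pitW n lam c 0 = 0 := by
  rw [pitW, pitD_zero n lam h0 hnonneg, min_eq_right hc]; omega

lemma lam_step (hstep : ∀ k < n, |lam (k + 1) - lam k| = 1) {k : ℕ} (hk : k < n) :
    lam (k + 1) - lam k = 1 ∨ lam (k + 1) - lam k = -1 :=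
  abs_eq (by norm_num : (0:ℤ) ≤ 1) |>.mp (hstep k hk)

lemma pitW_step (hstep : ∀ k < n, |lam (k + 1) - lam k| = 1) {c : ℤ} {k : ℕ} (hk : k < n) :
    pitW n lam c (k + 1) - pitW n lam c k = 1 ∨
      pitW n lam c (k + 1) - pitW n lam c k = -1 := by
  have hrec : min c (pitD n lam k) = min (lam k) (min c (pitD n lam (k + 1))) := by
    rw [pitD_rec n lam hk, min_left_comm]
  have hd : min c (pitD n lam (k + 1)) ≤ lam (k + 1) :=
    (min_le_right _ _).trans (pitD_le_lam n lam hk)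
  have hab := lam_step hstep hk
  rcases le_or_gt (min c (pitD n lam (k + 1))) (lam k) with h | h
  · rw [min_eq_right h] at hrec
    simp only [pitW]
    omega
  · rw [min_eq_left h.le] at hrec
    simp only [pitW]
    omega

lemma pitW_ge (_hnonneg : ∀ k ≤ n, 0 ≤ lam k) {c : ℤ} {j k : ℕ} (hjk : j ≤ k) (hk : k ≤ n) :
    -(min c (pitD n lam k)) ≤ pitW n lam c j := by
  have h1 : min c (pitD n lam j) ≤ lam j :=
    (min_le_right _ _).trans (pitD_le_lam n lam (hjk.trans hk))
  have h2 : min c (pitD n lam j) ≤ min c (pitD n lam k) :=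
    le_min (min_le_left _ _) ((min_le_right _ _).trans (pitD_mono n lam hjk))
  simp only [pitW]
  omega

lemma pitW_attained (h0 : lam 0 = 0) (hnonneg : ∀ k ≤ n, 0 ≤ lam k)
    (hstep : ∀ k < n, |lam (k + 1) - lam k| = 1) {c : ℤ} (hc : 0 ≤ c) :
    ∀ k ≤ n, ∃ j ≤ k, pitW n lam c j = -(min c (pitD n lam k)) := by
  intro k
  induction k with
  | zero =>
    intro _
    refine ⟨0, le_rfl, ?_⟩
    rw [pitW_zero h0 hnonneg hc, pitD_zero n lam h0 hnonneg, min_eq_right hc]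
    simp
  | succ k ih =>
    intro hk
    have hkn : k < n := hk
    have hrec : min c (pitD n lam k) = min (lam k) (min c (pitD n lam (k + 1))) := by
      rw [pitD_rec n lam hkn, min_left_comm]
    rcases le_or_gt (min c (pitD n lam (k + 1))) (lam k) with h | h
    · obtain ⟨j, hj, hjv⟩ := ih (Nat.le_of_succ_le hk)
      refine ⟨j, hj.trans (Nat.le_succ k), ?_⟩
      rw [hjv, hrec, min_eq_right h]
    · -- the new minimum is attained at k+1
      have hd : min c (pitD n lam (k + 1)) ≤ lam (k + 1) :=
        (min_le_right _ _).trans (pitD_le_lam n lam hk)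
      have hab := lam_step hstep hkn
      have heq : min c (pitD n lam (k + 1)) = lam (k + 1) := by omega
      refine ⟨k + 1, le_rfl, ?_⟩
      rw [pitW, heq]
      ring

end Main

/-- Rewriting the `Fin` sum as a range sum. -/
lemma fin_sum_eq (n : ℕ) (ε : Fin n → ℤ) {k : ℕ} (hk : k ≤ n) :
    (∑ i : Fin n, if (i : ℕ) < k then ε i else 0)
      = ∑ i ∈ Finset.range k, (if h : i < n then ε ⟨i, h⟩ else 0) := by
  have h1 : (∑ i : Fin n, if (i : ℕ) < k then ε i else 0)
      = ∑ j ∈ Finset.range n, (if j < k then (if h : j < n then ε ⟨j, h⟩ else 0) else 0) := by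
    rw [← Fin.sum_univ_eq_sum_range]
    refine Finset.sum_congr rfl fun i _ => ?_
    rcases lt_or_ge (i : ℕ) k with h | h
    · simp [h, i.isLt]
    · simp [not_lt.mpr h]
  rw [h1]
  rw [← Finset.sum_subset (Finset.range_subset_range.mpr hk)
    (fun x _ hx => if_neg (by simpa using hx))]
  exact Finset.sum_congr rfl fun i hi => if_pos (Finset.mem_range.mp hi)

theorem pitman_discrete_count (n : ℕ) (lam : ℕ → ℤ)
    (h0 : lam 0 = 0) (hnonneg : ∀ k ≤ n, 0 ≤ lam k)
    (hstep : ∀ k < n, |lam (k + 1) - lam k| = 1) :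
    ({ε : Fin n → ℤ | (∀ i, ε i = 1 ∨ ε i = -1) ∧
        ∀ k ≤ n,
          (∑ i : Fin n, if (i : ℕ) < k then ε i else 0) -
              2 * (Finset.range (k + 1)).inf'
                (Finset.nonempty_range_iff.mpr (Nat.succ_ne_zero k))
                (fun j => ∑ i : Fin n, if (i : ℕ) < j then ε i else 0)
            = lam k}.ncard : ℤ) = lam n + 1 := by
  classical
  set Φ : ℤ → (Fin n → ℤ) := fun c i => pitW n lam c ((i : ℕ) + 1) - pitW n lam c (i : ℕ)
    with hΦ
  have hlamn : 0 ≤ lam n := hnonneg n le_rfl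
  -- the walk determined by the sign sequence Φ c is pitW c
  have hwalk : ∀ c : ℤ, 0 ≤ c → ∀ k ≤ n,
      (∑ i : Fin n, if (i : ℕ) < k then Φ c i else 0) = pitW n lam c k := by
    intro c hc k hk
    rw [fin_sum_eq n (Φ c) hk]
    have : ∀ i ∈ Finset.range k, (if h : i < n then Φ c ⟨i, h⟩ else 0)
        = pitW n lam c (i + 1) - pitW n lam c i := by
      intro i hi
      have hin : i < n := lt_of_lt_of_le (Finset.mem_range.mp hi) hk
      simp [hin, hΦ]
    rw [Finset.sum_congr rfl this, Finset.sum_range_sub (pitW n lam c),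
      pitW_zero h0 hnonneg hc, sub_zero]
  -- main set equality
  have hset : {ε : Fin n → ℤ | (∀ i, ε i = 1 ∨ ε i = -1) ∧
        ∀ k ≤ n,
          (∑ i : Fin n, if (i : ℕ) < k then ε i else 0) -
              2 * (Finset.range (k + 1)).inf'
                (Finset.nonempty_range_iff.mpr (Nat.succ_ne_zero k))
                (fun j => ∑ i : Fin n, if (i : ℕ) < j then ε i else 0)
            = lam k} = Φ '' (Set.Icc 0 (lam n)) := by
    ext ε
    constructor
    · rintro ⟨hsign, hpit⟩
      set X : ℕ → ℤ := fun k => ∑ i : Fin n, if (i : ℕ) < k then ε i else 0 with hXdef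
      set M : ℕ → ℤ := fun k => (Finset.range (k + 1)).inf'
        (Finset.nonempty_range_iff.mpr (Nat.succ_ne_zero k)) X with hMdef
      have hMle : ∀ j k : ℕ, j ≤ k → M k ≤ X j := by
        intro j k hjk
        exact Finset.inf'_le _ (Finset.mem_range.mpr (Nat.lt_succ_of_le hjk))
      have hManti : ∀ j k : ℕ, j ≤ k → M k ≤ M j := by
        intro j k hjk
        refine Finset.le_inf' _ _ fun t ht => ?_
        exact hMle t k ((Nat.lt_succ_iff.mp (Finset.mem_range.mp ht)).trans hjk)
      have hX0 : X 0 = 0 := by simp [hXdef]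
      have hM0 : M 0 = 0 := by
        have : M 0 = X 0 := by simp [hMdef]
        rw [this, hX0]
      have hMstep : ∀ k : ℕ, M (k + 1) = min (X (k + 1)) (M k) := by
        intro k
        have : Finset.range (k + 1 + 1) = insert (k + 1) (Finset.range (k + 1)) :=
          Finset.range_add_one
        rw [hMdef]
        simp only [this]
        rw [Finset.inf'_insert (H := Finset.nonempty_range_iff.mpr (Nat.succ_ne_zero k))]
      have hXlam : ∀ k ≤ n, X k = lam k + 2 * M k := by
        intro k hk
        have h := hpit k hk
        change X k - 2 * M k = lam k at h
        omega
      have hXstep : ∀ k, (hkn : k < n) → X (k + 1) - X k = ε ⟨k, hkn⟩ := by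
        intro k hkn
        have e1 : X (k + 1) = ∑ i ∈ Finset.range (k + 1),
            (if h : i < n then ε ⟨i, h⟩ else 0) := fin_sum_eq n ε (by omega)
        have e2 : X k = ∑ i ∈ Finset.range k,
            (if h : i < n then ε ⟨i, h⟩ else 0) := fin_sum_eq n ε (by omega)
        rw [e1, e2, Finset.sum_range_succ, dif_pos hkn]
        ring
      set c : ℤ := -(M n) with hcdef
      have hc0 : 0 ≤ c := by
        have := hMle 0 n (Nat.zero_le n)
        rw [hX0] at this
        omega
      have hcn : c ≤ lam n := by
        have h1 := hXlam n le_rfl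
        have h2 := hMle n n le_rfl
        omega
      -- key claim: M k = -(min c (pitD n lam k)) for k ≤ n
      have hkey : ∀ j : ℕ, ∀ k : ℕ, k + j = n → min c (pitD n lam k) ≤ -(M k) := by
        intro j
        induction j with
        | zero =>
          intro k hkn
          have hkn' : k = n := by omega
          rw [hkn', pitD_last, min_eq_left hcn, hcdef]
        | succ j ih =>
          intro k hkn
          have hklt : k < n := by omega
          have ihk := ih (k + 1) (by omega)
          have hms := hMstep k
          rcases le_or_gt (M k) (X (k + 1)) with h | h
          · have : M (k + 1) = M k := by rw [hms]; omega
            have hmono : min c (pitD n lam k) ≤ min c (pitD n lam (k + 1)) :=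
              le_min (min_le_left _ _)
                ((min_le_right _ _).trans (pitD_mono n lam (Nat.le_succ k)))
            omega
          · -- strict new minimum: X k = M k
            have hε := hsign ⟨k, hklt⟩
            have hXs := hXstep k hklt
            have hXk := hMle k k le_rfl
            have hXkM : X k = M k := by omega
            have hlamk := hXlam k hklt.le
            have : lam k = -(M k) := by omega
            have hle : min c (pitD n lam k) ≤ lam k :=
              (min_le_right _ _).trans (pitD_le_lam n lam hklt.le)
            omega
      have hkey' : ∀ k ≤ n, M k = -(min c (pitD n lam k)) := by
        intro k hk
        have h1 := hkey (n - k) k (by omega)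
        -- other direction : -(M k) ≤ min c (pitD n lam k)
        have h2 : -(M k) ≤ c := by
          have := hManti k n hk
          omega
        have h3 : -(M k) ≤ pitD n lam k := by
          refine le_pitD n lam ?_ ?_
          · have h4 := hXlam n le_rfl
            have h5 := hMle n n le_rfl
            have h6 := hManti k n hk
            omega
          · intro j hkj hjn
            have h4 := hXlam j hjn
            have h5 := hMle j j le_rfl
            have h6 := hManti k j hkj
            omega
        have : -(M k) ≤ min c (pitD n lam k) := le_min h2 h3
        omega
      have hXW : ∀ k ≤ n, X k = pitW n lam c k := by
        intro k hk
        have := hXlam k hk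
        rw [hkey' k hk] at this
        rw [pitW]
        omega
      refine ⟨c, ⟨hc0, hcn⟩, ?_⟩
      funext i
      have hin : (i : ℕ) < n := i.isLt
      have h1 := hXstep (i : ℕ) hin
      have h2 := hXW ((i : ℕ) + 1) (by omega)
      have h3 := hXW (i : ℕ) (by omega)
      have : ε ⟨(i : ℕ), by omega⟩ = ε i := by congr
      rw [hΦ]
      simp only
      omega
    · rintro ⟨c, ⟨hc0, hcn⟩, rfl⟩
      constructor
      · intro i
        have := pitW_step hstep (c := c) i.isLt
        rw [hΦ]
        simpa using this
      · intro k hk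
        have hsum : ∀ j ≤ n,
            (∑ i : Fin n, if (i : ℕ) < j then Φ c i else 0) = pitW n lam c j :=
          hwalk c hc0
        rw [hsum k hk]
        have hinf : (Finset.range (k + 1)).inf'
            (Finset.nonempty_range_iff.mpr (Nat.succ_ne_zero k))
            (fun j => ∑ i : Fin n, if (i : ℕ) < j then Φ c i else 0)
            = -(min c (pitD n lam k)) := by
          have hcongr : (Finset.range (k + 1)).inf'
              (Finset.nonempty_range_iff.mpr (Nat.succ_ne_zero k))
              (fun j => ∑ i : Fin n, if (i : ℕ) < j then Φ c i else 0)
              = (Finset.range (k + 1)).inf'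
              (Finset.nonempty_range_iff.mpr (Nat.succ_ne_zero k))
              (fun j => pitW n lam c j) := by
            refine Finset.inf'_congr _ rfl fun j hj => ?_
            exact hsum j ((Nat.lt_succ_iff.mp (Finset.mem_range.mp hj)).trans hk)
          rw [hcongr]
          apply le_antisymm
          · obtain ⟨j, hjk, hjv⟩ := pitW_attained h0 hnonneg hstep hc0 k hk
            calc (Finset.range (k + 1)).inf' _ (fun j => pitW n lam c j) ≤ pitW n lam c j :=
                Finset.inf'_le _ (Finset.mem_range.mpr (Nat.lt_succ_of_le hjk))
              _ = _ := hjv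
          · refine Finset.le_inf' _ _ fun j hj => ?_
            exact pitW_ge hnonneg (Nat.lt_succ_iff.mp (Finset.mem_range.mp hj)) hk
        rw [hinf, pitW]
        ring
  rw [hset]
  -- injectivity
  have hinj : Set.InjOn Φ (Set.Icc 0 (lam n)) := by
    rintro c ⟨hc0, hcn⟩ c' ⟨hc0', hcn'⟩ hcc
    have h1 : pitW n lam c n = pitW n lam c' n := by
      have e1 : ∀ c'' : ℤ, 0 ≤ c'' → (∑ i : Fin n, Φ c'' i) = pitW n lam c'' n := by
        intro c'' hc''
        have := hwalk c'' hc'' n le_rfl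
        rw [← this]
        refine Finset.sum_congr rfl fun i _ => ?_
        rw [if_pos i.isLt]
      rw [← e1 c hc0, ← e1 c' hc0', hcc]
    rw [pitW, pitW, pitD_last, min_eq_left hcn, min_eq_left hcn'] at h1
    omega
  rw [Set.ncard_image_of_injOn hinj]
  have : Set.Icc (0 : ℤ) (lam n) = ↑(Finset.Icc (0 : ℤ) (lam n)) := by
    rw [Finset.coe_Icc]
  rw [this, Set.ncard_coe_finset, Int.card_Icc]
  omega
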